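/- Let N ≥ 2, 0 < κ ≤ 1/4, set α₊ = 1 + √(1 − 4κ), and let 1 < q < q_c where q_c = (N + α₊/2)/(N − 2 + α₊/2). Then there exists ε₀ > 0 such that for every 0 < ε ≤ ε₀ the function v(x) = ε·x_N^{α₊/2}·|x|^{−2/(q−1) − α₊/2} satisfies −Δv(x) − κ·v(x)/x_N² + v(x)^q ≤ 0 at every point x of the open half-space ℝ^N_+ (one may take ε₀ = (ℓ_{q,N} − μ_κ)^{1/(q−1)}). -/

import Mathlib

open MeasureTheory Filter RealInnerProductSpace

/-- The Laplacian of `f` at `x`: the sum of the (pure) second partial derivatives. -/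
noncomputable def laplacian {N : ℕ} (f : EuclideanSpace ℝ (Fin N) → ℝ)
    (x : EuclideanSpace ℝ (Fin N)) : ℝ :=
  ∑ i : Fin N,
    iteratedFDeriv ℝ 2 f x ![EuclideanSpace.single i 1, EuclideanSpace.single i 1]

section helpers

lemma secondDeriv_line {E : Type*} [NormedAddCommGroup E] [NormedSpace ℝ E]
    (f : E → ℝ) (x v : E) (hf : ContDiffAt ℝ 2 f x) :
    iteratedFDeriv ℝ 2 f x ![v, v] = deriv (deriv (fun t : ℝ => f (x + t • v))) 0 := by
  have hline : ∀ t : ℝ, HasDerivAt (fun s : ℝ => x + s • v) v t := by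
    intro t
    simpa using ((hasDerivAt_id t).smul_const v).const_add x
  have hev : ∀ᶠ y in nhds x, DifferentiableAt ℝ f y := by
    filter_upwards [hf.eventually (by simp)] with y hy
    exact hy.differentiableAt (by simp)
  have h0 : (fun t : ℝ => x + t • v) 0 = x := by simp
  have hev' : ∀ᶠ t in nhds (0 : ℝ), DifferentiableAt ℝ f (x + t • v) := by
    have hc : ContinuousAt (fun t : ℝ => x + t • v) 0 := (hline 0).continuousAt
    have ht : Tendsto (fun t : ℝ => x + t • v) (nhds 0) (nhds x) := by
      simpa using hc.tendsto
    exact ht.eventually hev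
  have hderiv1 : deriv (fun t : ℝ => f (x + t • v)) =ᶠ[nhds (0:ℝ)]
      fun t => fderiv ℝ f (x + t • v) v := by
    filter_upwards [hev'] with t ht
    exact (ht.hasFDerivAt.comp_hasDerivAt t (hline t)).deriv
  rw [hderiv1.deriv_eq]
  have hf' : DifferentiableAt ℝ (fderiv ℝ f) x :=
    ((hf.fderiv_right (m := 1) (by norm_num))).differentiableAt (by simp)
  have h2 : HasDerivAt (fun t : ℝ => fderiv ℝ f (x + t • v))
      (fderiv ℝ (fderiv ℝ f) x v) 0 := by
    have := hf'.hasFDerivAt.comp_hasDerivAt_of_eq 0 (hline 0) h0.symm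
    exact this
  have h3 : HasDerivAt (fun t : ℝ => fderiv ℝ f (x + t • v) v)
      ((fderiv ℝ (fderiv ℝ f) x v) v) 0 := by
    have := h2.clm_apply (hasDerivAt_const (0:ℝ) v)
    simpa using this
  rw [h3.deriv, iteratedFDeriv_two_apply]
  simp

lemma oneD (e a c c1 c2 c3 δ : ℝ) (h1 : 0 < c1) (h2 : 0 < c2) :
    deriv (deriv (fun t : ℝ => e * (c1 + δ * t) ^ a * (c2 + 2 * c3 * t + t ^ 2) ^ c)) 0
      = e * (δ ^ 2 * (a * (a - 1)) * c1 ^ (a - 2) * c2 ^ c)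
        + e * (4 * δ * a * c * c3 * c1 ^ (a - 1) * c2 ^ (c - 1))
        + e * c1 ^ a * (4 * c * (c - 1) * c3 ^ 2 * c2 ^ (c - 2) + 2 * c * c2 ^ (c - 1)) := by
  have hP : ∀ t : ℝ, HasDerivAt (fun t : ℝ => c1 + δ * t) δ t := by
    intro t; simpa using ((hasDerivAt_id t).const_mul δ).const_add c1
  have hQ : ∀ t : ℝ, HasDerivAt (fun t : ℝ => c2 + 2 * c3 * t + t ^ 2) (2 * c3 + 2 * t) t := by
    intro t
    have h := (((hasDerivAt_id t).const_mul (2 * c3)).const_add c2).add (hasDerivAt_pow 2 t)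
    exact h.congr_deriv (by norm_num)
  have hpos : ∀ᶠ t in nhds (0 : ℝ), 0 < c1 + δ * t ∧ 0 < c2 + 2 * c3 * t + t ^ 2 := by
    have e1 : ∀ᶠ t in nhds (0 : ℝ), 0 < c1 + δ * t :=
      (hP 0).continuousAt.tendsto.eventually (eventually_gt_nhds (by simpa using h1))
    have e2 : ∀ᶠ t in nhds (0 : ℝ), 0 < c2 + 2 * c3 * t + t ^ 2 :=
      (hQ 0).continuousAt.tendsto.eventually (eventually_gt_nhds (by norm_num [h2]))
    exact e1.and e2
  have hg : ∀ t : ℝ, 0 < c1 + δ * t → 0 < c2 + 2 * c3 * t + t ^ 2 →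
      HasDerivAt (fun t : ℝ => e * (c1 + δ * t) ^ a * (c2 + 2 * c3 * t + t ^ 2) ^ c)
        (e * δ * a * ((c1 + δ * t) ^ (a - 1) * (c2 + 2 * c3 * t + t ^ 2) ^ c)
          + e * ((c1 + δ * t) ^ a
              * ((2 * c3 + 2 * t) * c * (c2 + 2 * c3 * t + t ^ 2) ^ (c - 1)))) t := by
    intro t hPt hQt
    have hPa : HasDerivAt (fun t : ℝ => (c1 + δ * t) ^ a) (δ * a * (c1 + δ * t) ^ (a - 1)) t :=
      (hP t).rpow_const (Or.inl hPt.ne')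
    have hQc : HasDerivAt (fun t : ℝ => (c2 + 2 * c3 * t + t ^ 2) ^ c)
        ((2 * c3 + 2 * t) * c * (c2 + 2 * c3 * t + t ^ 2) ^ (c - 1)) t :=
      (hQ t).rpow_const (Or.inl hQt.ne')
    have := (hPa.const_mul e).mul hQc
    exact this.congr_deriv (by ring)
  have heq : deriv (fun t : ℝ => e * (c1 + δ * t) ^ a * (c2 + 2 * c3 * t + t ^ 2) ^ c)
      =ᶠ[nhds (0 : ℝ)] fun t =>
        e * δ * a * ((c1 + δ * t) ^ (a - 1) * (c2 + 2 * c3 * t + t ^ 2) ^ c)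
          + e * ((c1 + δ * t) ^ a
              * ((2 * c3 + 2 * t) * c * (c2 + 2 * c3 * t + t ^ 2) ^ (c - 1))) := by
    filter_upwards [hpos] with t ht
    exact (hg t ht.1 ht.2).deriv
  rw [heq.deriv_eq]
  have hP0 : (0 : ℝ) < c1 + δ * 0 := by simpa using h1
  have hQ0 : (0 : ℝ) < c2 + 2 * c3 * 0 + 0 ^ 2 := by norm_num [h2]
  have hPa1 : HasDerivAt (fun t : ℝ => (c1 + δ * t) ^ (a - 1))
      (δ * (a - 1) * (c1 + δ * 0) ^ (a - 2)) 0 := by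
    have := (hP 0).rpow_const (p := a - 1) (Or.inl hP0.ne')
    rwa [show a - 1 - 1 = a - 2 by ring] at this
  have hPa : HasDerivAt (fun t : ℝ => (c1 + δ * t) ^ a)
      (δ * a * (c1 + δ * 0) ^ (a - 1)) 0 := (hP 0).rpow_const (Or.inl hP0.ne')
  have hQc : HasDerivAt (fun t : ℝ => (c2 + 2 * c3 * t + t ^ 2) ^ c)
      ((2 * c3 + 2 * 0) * c * (c2 + 2 * c3 * 0 + 0 ^ 2) ^ (c - 1)) 0 :=
    (hQ 0).rpow_const (Or.inl hQ0.ne')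
  have hQc1 : HasDerivAt (fun t : ℝ => (c2 + 2 * c3 * t + t ^ 2) ^ (c - 1))
      ((2 * c3 + 2 * 0) * (c - 1) * (c2 + 2 * c3 * 0 + 0 ^ 2) ^ (c - 2)) 0 := by
    have := (hQ 0).rpow_const (p := c - 1) (Or.inl hQ0.ne')
    rwa [show c - 1 - 1 = c - 2 by ring] at this
  have hlin : HasDerivAt (fun t : ℝ => (2 * c3 + 2 * t) * c) (2 * c) 0 := by
    simpa using (((hasDerivAt_id (0:ℝ)).const_mul 2).const_add (2 * c3)).mul_const c
  have H1 := (hPa1.mul hQc).const_mul (e * δ * a)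
  have H2 := (hPa.mul (hlin.mul hQc1)).const_mul e
  have H := H1.add H2
  have H' : HasDerivAt (fun t : ℝ => e * δ * a * ((c1 + δ * t) ^ (a - 1) * (c2 + 2 * c3 * t + t ^ 2) ^ c)
      + e * ((c1 + δ * t) ^ a * ((2 * c3 + 2 * t) * c * (c2 + 2 * c3 * t + t ^ 2) ^ (c - 1)))) _ 0 := H
  rw [H'.deriv]
  norm_num
  ring

theorem aux {N : ℕ} (hN : 2 ≤ N)
    (κ α q : ℝ) (hκ0 : 0 < κ) (hκ1 : κ ≤ 1 / 4)
    (hα : α = 1 + Real.sqrt (1 - 4 * κ))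
    (hq : 1 < q) (hqc : q < ((N : ℝ) + α / 2) / ((N : ℝ) - 2 + α / 2))
    (i0 : Fin N) :
    ∃ ε₀ : ℝ, 0 < ε₀ ∧
      ∀ ε : ℝ, 0 < ε → ε ≤ ε₀ →
        ∀ x : EuclideanSpace ℝ (Fin N), 0 < x i0 →
          -laplacian
              (fun y => ε * (y i0) ^ (α / 2)
                * ‖y‖ ^ (-(2 / (q - 1) + α / 2))) x
            - κ * (ε * (x i0) ^ (α / 2)
                * ‖x‖ ^ (-(2 / (q - 1) + α / 2)))
                / (x i0) ^ 2
            + (ε * (x i0) ^ (α / 2)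
                * ‖x‖ ^ (-(2 / (q - 1) + α / 2))) ^ q ≤ 0 := by
  have hq1 : (0:ℝ) < q - 1 := by linarith
  set a : ℝ := α / 2 with ha_def
  set β : ℝ := -(2 / (q - 1) + α / 2) with hβ_def
  set c : ℝ := β / 2 with hc_def
  set m : ℝ := 2 / (q - 1) with hm_def
  have hs0 : (0:ℝ) ≤ Real.sqrt (1 - 4 * κ) := Real.sqrt_nonneg _
  have hs2 : Real.sqrt (1 - 4 * κ) ^ 2 = 1 - 4 * κ := Real.sq_sqrt (by linarith)
  have ha : 0 < a := by rw [ha_def, hα]; linarith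
  have haκ : a * (a - 1) = -κ := by
    rw [ha_def, hα]; linear_combination hs2 / 4
  have hm : 0 < m := by positivity
  have hNa : (0:ℝ) < (N : ℝ) - 2 + a := by
    have : (2:ℝ) ≤ (N:ℝ) := by exact_mod_cast hN
    linarith
  have hqmul : q * ((N:ℝ) - 2 + a) < (N:ℝ) + a := (lt_div_iff₀ hNa).mp hqc
  have hmgt : (N:ℝ) - 2 + a < m := by
    rw [hm_def, lt_div_iff₀ hq1]; nlinarith
  set K : ℝ := (m + a) * (m + 2 - N - a) with hK_def
  have hK : 0 < K := mul_pos (by linarith) (by linarith)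
  have hKc : K = 4 * a * c + 4 * c * (c - 1) + 2 * (N:ℝ) * c := by
    rw [hK_def, hc_def, hβ_def, hm_def, ha_def]; ring
  refine ⟨K ^ (q - 1)⁻¹, Real.rpow_pos_of_pos hK _, ?_⟩
  intro ε hε hεε₀ x hx
  have hεK : ε ^ (q - 1) ≤ K := by
    calc ε ^ (q - 1) ≤ (K ^ (q - 1)⁻¹) ^ (q - 1) :=
          Real.rpow_le_rpow hε.le hεε₀ (by linarith)
      _ = K := by
          rw [← Real.rpow_mul hK.le, inv_mul_cancel₀ hq1.ne', Real.rpow_one]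
  have hxne : x ≠ 0 := by
    intro h; rw [h] at hx; simp at hx
  have hr : 0 < ‖x‖ := norm_pos_iff.mpr hxne
  set c1 : ℝ := x i0 with hc1_def
  have hsum : ∑ j, (x j) ^ 2 = ‖x‖ ^ 2 := by
    rw [EuclideanSpace.norm_eq, Real.sq_sqrt (by positivity)]
    simp [Real.norm_eq_abs, sq_abs]
  have hc1r : c1 ≤ ‖x‖ := by
    have h1 : c1 ^ 2 ≤ ‖x‖ ^ 2 := by
      rw [← hsum]
      exact Finset.single_le_sum (fun j _ => sq_nonneg (x j)) (Finset.mem_univ i0)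
    nlinarith
  have hr2 : ∀ u : ℝ, (‖x‖ ^ 2) ^ u = ‖x‖ ^ (2 * u) := by
    intro u
    rw [← Real.rpow_natCast ‖x‖ 2, ← Real.rpow_mul hr.le]
    norm_num
  -- contDiff
  have hfd : ContDiffAt ℝ 2
      (fun y : EuclideanSpace ℝ (Fin N) => ε * (y i0) ^ a * ‖y‖ ^ β) x := by
    have hpr : ContDiffAt ℝ 2 (fun y : EuclideanSpace ℝ (Fin N) => y i0) x := by
      have h := ((EuclideanSpace.proj (𝕜 := ℝ) i0).contDiff (n := 2)).contDiffAt (x := x)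
      have he : ⇑(EuclideanSpace.proj i0 : EuclideanSpace ℝ (Fin N) →L[ℝ] ℝ)
          = fun y : EuclideanSpace ℝ (Fin N) => y i0 := rfl
      rwa [he] at h
    have h1 : ContDiffAt ℝ 2 (fun y : EuclideanSpace ℝ (Fin N) => (y i0) ^ a) x :=
      hpr.rpow_const_of_ne (ne_of_gt hx)
    have h2 : ContDiffAt ℝ 2 (fun y : EuclideanSpace ℝ (Fin N) => ‖y‖ ^ β) x :=
      (contDiffAt_norm (𝕜 := ℝ) hxne).rpow_const_of_ne (ne_of_gt hr)
    exact (contDiffAt_const.mul h1).mul h2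
  -- the Laplacian
  have hterm : ∀ i : Fin N,
      iteratedFDeriv ℝ 2 (fun y : EuclideanSpace ℝ (Fin N) => ε * (y i0) ^ a * ‖y‖ ^ β) x
        ![EuclideanSpace.single i (1:ℝ), EuclideanSpace.single i (1:ℝ)]
      = ε * ((if i = i0 then (1:ℝ) else 0) ^ 2 * (a * (a - 1)) * c1 ^ (a - 2) * (‖x‖ ^ 2) ^ c)
        + ε * (4 * (if i = i0 then (1:ℝ) else 0) * a * c * (x i) * c1 ^ (a - 1)
            * (‖x‖ ^ 2) ^ (c - 1))
        + ε * c1 ^ a * (4 * c * (c - 1) * (x i) ^ 2 * (‖x‖ ^ 2) ^ (c - 2)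
            + 2 * c * (‖x‖ ^ 2) ^ (c - 1)) := by
    intro i
    rw [secondDeriv_line _ x _ hfd]
    have hfun : (fun t : ℝ =>
        (fun y : EuclideanSpace ℝ (Fin N) => ε * (y i0) ^ a * ‖y‖ ^ β)
          (x + t • EuclideanSpace.single i (1:ℝ)))
        = fun t : ℝ => ε * (c1 + (if i = i0 then (1:ℝ) else 0) * t) ^ a
            * (‖x‖ ^ 2 + 2 * (x i) * t + t ^ 2) ^ c := by
      funext t
      have hcoord : (x + t • EuclideanSpace.single i (1:ℝ)) i0
          = c1 + (if i = i0 then (1:ℝ) else 0) * t := by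
        by_cases h : i = i0
        · subst h
          simp [EuclideanSpace.single_apply, hc1_def]
        · simp [EuclideanSpace.single_apply, h, Ne.symm h, hc1_def]
      have hnorm2 : ‖x + t • EuclideanSpace.single i (1:ℝ)‖ ^ 2
          = ‖x‖ ^ 2 + 2 * (x i) * t + t ^ 2 := by
        rw [norm_add_sq_real, real_inner_smul_right, norm_smul]
        have hxi : (inner ℝ x (EuclideanSpace.single i (1:ℝ)) : ℝ) = x i := by
          rw [EuclideanSpace.inner_single_right]; simp
        rw [hxi, EuclideanSpace.norm_single, norm_one, mul_one, Real.norm_eq_abs, sq_abs]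
        ring
      have hnormpow : ‖x + t • EuclideanSpace.single i (1:ℝ)‖ ^ β
          = (‖x‖ ^ 2 + 2 * (x i) * t + t ^ 2) ^ c := by
        rw [← hnorm2, ← Real.rpow_natCast ‖x + t • EuclideanSpace.single i (1:ℝ)‖ 2,
          ← Real.rpow_mul (norm_nonneg _)]
        congr 1
        rw [hc_def]
        push_cast
        ring
      simp only [hcoord, hnormpow]
    rw [hfun, oneD ε a c c1 (‖x‖ ^ 2) (x i) (if i = i0 then (1:ℝ) else 0) hx (by positivity)]
  have hlap : laplacian (fun y : EuclideanSpace ℝ (Fin N) => ε * (y i0) ^ a * ‖y‖ ^ β) x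
      = ε * ((a * (a - 1)) * c1 ^ (a - 2) * (‖x‖ ^ 2) ^ c)
        + ε * ((4 * a * c + 4 * c * (c - 1) + 2 * (N:ℝ) * c) * c1 ^ a * (‖x‖ ^ 2) ^ (c - 1)) := by
    rw [laplacian, Finset.sum_congr rfl (fun i _ => hterm i)]
    have hsplit : ∀ i : Fin N,
        ε * ((if i = i0 then (1:ℝ) else 0) ^ 2 * (a * (a - 1)) * c1 ^ (a - 2) * (‖x‖ ^ 2) ^ c)
          + ε * (4 * (if i = i0 then (1:ℝ) else 0) * a * c * (x i) * c1 ^ (a - 1)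
              * (‖x‖ ^ 2) ^ (c - 1))
          + ε * c1 ^ a * (4 * c * (c - 1) * (x i) ^ 2 * (‖x‖ ^ 2) ^ (c - 2)
              + 2 * c * (‖x‖ ^ 2) ^ (c - 1))
        = (if i = i0 then
            ε * ((a * (a - 1)) * c1 ^ (a - 2) * (‖x‖ ^ 2) ^ c)
              + ε * (4 * a * c * c1 * c1 ^ (a - 1) * (‖x‖ ^ 2) ^ (c - 1)) else 0)
          + (ε * c1 ^ a * (4 * c * (c - 1) * (‖x‖ ^ 2) ^ (c - 2)) * (x i) ^ 2
              + ε * c1 ^ a * (2 * c * (‖x‖ ^ 2) ^ (c - 1))) := by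
      intro i
      split_ifs with h
      · rw [h]; ring
      · ring
    rw [Finset.sum_congr rfl (fun i _ => hsplit i), Finset.sum_add_distrib,
      Finset.sum_ite_eq' Finset.univ i0, Finset.sum_add_distrib, ← Finset.sum_mul,
      ← Finset.mul_sum]
    simp only [Finset.mem_univ, if_true, hsum, Finset.sum_const, Finset.card_univ,
      Fintype.card_fin, nsmul_eq_mul]
    have f1 : c1 ^ (a - 1) * c1 = c1 ^ a := by
      have h := Real.rpow_add_one hx.ne' (a - 1)
      rw [show a - 1 + 1 = a by ring] at h
      exact h.symm
    have f2 : (‖x‖ ^ 2) ^ (c - 2) * ‖x‖ ^ 2 = (‖x‖ ^ 2) ^ (c - 1) := by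
      have h := Real.rpow_add_one (by positivity : (‖x‖ ^ 2 : ℝ) ≠ 0) (c - 2)
      rw [show c - 2 + 1 = c - 1 by ring] at h
      exact h.symm
    linear_combination (ε * 4 * a * c * (‖x‖ ^ 2) ^ (c - 1)) * f1
      + (ε * c1 ^ a * 4 * c * (c - 1)) * f2
  -- power facts
  have hβ2c : ‖x‖ ^ β = (‖x‖ ^ 2) ^ c := by
    rw [hr2 c]; congr 1; rw [hc_def]; ring
  have hdiv : c1 ^ a / c1 ^ 2 = c1 ^ (a - 2) := by
    rw [← Real.rpow_natCast c1 2, ← Real.rpow_sub hx]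
    norm_num
  have hiden : -laplacian (fun y : EuclideanSpace ℝ (Fin N) => ε * (y i0) ^ a * ‖y‖ ^ β) x
      - κ * (ε * c1 ^ a * ‖x‖ ^ β) / c1 ^ 2
      = -(ε * K * c1 ^ a * (‖x‖ ^ 2) ^ (c - 1)) := by
    rw [hlap, hβ2c]
    have h' : κ * (ε * c1 ^ a * (‖x‖ ^ 2) ^ c) / c1 ^ 2
        = κ * ε * (c1 ^ a / c1 ^ 2) * (‖x‖ ^ 2) ^ c := by ring
    rw [h', hdiv]
    linear_combination (-(ε) * c1 ^ (a - 2) * (‖x‖ ^ 2) ^ c) * haκ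
      + (ε * c1 ^ a * (‖x‖ ^ 2) ^ (c - 1)) * hKc
  have hXc1 : (‖x‖ ^ 2) ^ (c - 1) = ‖x‖ ^ (β - 2) := by
    rw [hr2]; congr 1; rw [hc_def]; ring
  have hineq : (ε * c1 ^ a * ‖x‖ ^ β) ^ q ≤ ε * K * c1 ^ a * (‖x‖ ^ 2) ^ (c - 1) := by
    have e1 : (ε * c1 ^ a * ‖x‖ ^ β) ^ q = ε ^ q * (c1 ^ a) ^ q * (‖x‖ ^ β) ^ q := by
      rw [Real.mul_rpow (by positivity) (by positivity),
        Real.mul_rpow hε.le (by positivity)]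
    have e2 : (c1 ^ a) ^ q = c1 ^ (a * q) := (Real.rpow_mul hx.le a q).symm
    have e3 : (‖x‖ ^ β) ^ q = ‖x‖ ^ (β * q) := (Real.rpow_mul (norm_nonneg x) β q).symm
    have e4 : ε ^ q = ε * ε ^ (q - 1) := by
      nth_rewrite 1 [show q = 1 + (q - 1) by ring]
      rw [Real.rpow_add hε, Real.rpow_one]
    have e5 : c1 ^ (a * q) = c1 ^ a * c1 ^ (a * (q - 1)) := by
      rw [← Real.rpow_add hx]; congr 1; ring
    have e6 : ‖x‖ ^ (β * q) = ‖x‖ ^ (β - 2) * ‖x‖ ^ (-(a * (q - 1))) := by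
      rw [← Real.rpow_add hr]
      congr 1
      rw [hβ_def, hm_def, ha_def]
      field_simp
      ring
    have hfac : c1 ^ (a * (q - 1)) * ‖x‖ ^ (-(a * (q - 1))) ≤ 1 := by
      have h7 : c1 ^ (a * (q - 1)) ≤ ‖x‖ ^ (a * (q - 1)) :=
        Real.rpow_le_rpow hx.le hc1r (by positivity)
      have h8 : ‖x‖ ^ (a * (q - 1)) * ‖x‖ ^ (-(a * (q - 1))) = 1 := by
        rw [← Real.rpow_add hr]; norm_num
      calc c1 ^ (a * (q - 1)) * ‖x‖ ^ (-(a * (q - 1)))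
          ≤ ‖x‖ ^ (a * (q - 1)) * ‖x‖ ^ (-(a * (q - 1))) := by
            have : (0:ℝ) ≤ ‖x‖ ^ (-(a * (q - 1))) := by positivity
            exact mul_le_mul_of_nonneg_right h7 this
        _ = 1 := h8
    have hmid : ε ^ (q - 1) * (c1 ^ (a * (q - 1)) * ‖x‖ ^ (-(a * (q - 1)))) ≤ K * 1 :=
      mul_le_mul hεK hfac (by positivity) hK.le
    calc (ε * c1 ^ a * ‖x‖ ^ β) ^ q
        = (ε * c1 ^ a * ‖x‖ ^ (β - 2))
            * (ε ^ (q - 1) * (c1 ^ (a * (q - 1)) * ‖x‖ ^ (-(a * (q - 1))))) := by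
          rw [e1, e2, e3, e4, e5, e6]; ring
      _ ≤ (ε * c1 ^ a * ‖x‖ ^ (β - 2)) * (K * 1) := by
          have : (0:ℝ) ≤ ε * c1 ^ a * ‖x‖ ^ (β - 2) := by positivity
          exact mul_le_mul_of_nonneg_left hmid this
      _ = ε * K * c1 ^ a * (‖x‖ ^ 2) ^ (c - 1) := by rw [hXc1]; ring
  linarith [hiden, hineq]

end helpers

/-- in the subcritical range `1 < q < q_c`, for small `ε > 0` the function
`v(x) = ε x_N^{α₊/2} |x|^{-2/(q-1) - α₊/2}` is a subsolution of
`-Δv - κ v/x_N² + v^q = 0` in the half-space `{x_N > 0}`. -/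
theorem stmt_8 {N : ℕ} (hN : 2 ≤ N)
    (κ α q : ℝ) (hκ0 : 0 < κ) (hκ1 : κ ≤ 1 / 4)
    (hα : α = 1 + Real.sqrt (1 - 4 * κ))
    (hq : 1 < q) (hqc : q < ((N : ℝ) + α / 2) / ((N : ℝ) - 2 + α / 2)) :
    ∃ ε₀ : ℝ, 0 < ε₀ ∧
      ∀ ε : ℝ, 0 < ε → ε ≤ ε₀ →
        ∀ x : EuclideanSpace ℝ (Fin N), 0 < x ⟨N - 1, by omega⟩ →
          -laplacian
              (fun y => ε * (y ⟨N - 1, by omega⟩) ^ (α / 2)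
                * ‖y‖ ^ (-(2 / (q - 1) + α / 2))) x
            - κ * (ε * (x ⟨N - 1, by omega⟩) ^ (α / 2)
                * ‖x‖ ^ (-(2 / (q - 1) + α / 2)))
                / (x ⟨N - 1, by omega⟩) ^ 2
            + (ε * (x ⟨N - 1, by omega⟩) ^ (α / 2)
                * ‖x‖ ^ (-(2 / (q - 1) + α / 2))) ^ q ≤ 0 := by
  exact aux hN κ α q hκ0 hκ1 hα hq hqc ⟨N - 1, by omega⟩
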